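/- Maximal value of the sparse objective: for v ∈ ℝ^p and λ ≥ 0 with S_λ(v) ≠ 0, the value max_{‖β‖₂=1} (⟨β, v⟩ − λ‖β‖₁) equals ‖S_λ(v)‖₂, where S_λ is the coordinate-wise soft-thresholding operator. -/

import Mathlib

open scoped RealInnerProductSpace

/-- Soft-thresholding (shrinkage) operator `S_λ(x) = sign(x)(|x| − λ) 1{|x| > λ}`. -/
noncomputable def softThresh (lam x : ℝ) : ℝ :=
  Real.sign x * (|x| - lam) * (if lam < |x| then 1 else 0)

lemma softThresh_key (lam x : ℝ) (hlam : 0 ≤ lam) :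
    softThresh lam x * x - lam * |softThresh lam x| = (softThresh lam x) ^ 2 := by
  unfold softThresh
  by_cases h : lam < |x|
  · have hx0 : x ≠ 0 := by
      intro h0; rw [h0] at h; simp at h; linarith
    rcases lt_or_gt_of_ne hx0 with hneg | hpos
    · rw [Real.sign_of_neg hneg, if_pos h]
      have hax : |x| = -x := abs_of_neg hneg
      have hw : (-1 : ℝ) * (|x| - lam) * 1 = x + lam := by rw [hax]; ring
      rw [hw]
      have : |x + lam| = -(x + lam) := by
        apply abs_of_nonpos; rw [hax] at h; linarith
      rw [this]; ring
    · rw [Real.sign_of_pos hpos, if_pos h]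
      have hax : |x| = x := abs_of_pos hpos
      have hw : (1 : ℝ) * (|x| - lam) * 1 = x - lam := by rw [hax]; ring
      rw [hw]
      have : |x - lam| = x - lam := by
        apply abs_of_nonneg; rw [hax] at h; linarith
      rw [this]; ring
  · rw [if_neg h]; ring_nf; simp

lemma softThresh_abs (lam x : ℝ) (hlam : 0 ≤ lam) :
    |softThresh lam x| = if lam < |x| then |x| - lam else 0 := by
  unfold softThresh
  by_cases h : lam < |x|
  · have hx0 : x ≠ 0 := by
      intro h0; rw [h0] at h; simp at h; linarith
    rw [if_pos h, if_pos h, abs_mul, abs_mul]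
    rcases lt_or_gt_of_ne hx0 with hneg | hpos
    · rw [Real.sign_of_neg hneg]
      simp [abs_of_nonneg (by linarith : (0:ℝ) ≤ |x| - lam)]
    · rw [Real.sign_of_pos hpos]
      simp [abs_of_nonneg (by linarith : (0:ℝ) ≤ |x| - lam)]
  · rw [if_neg h, if_neg h]; simp

lemma softThresh_bound (lam x b : ℝ) (hlam : 0 ≤ lam) :
    b * x - lam * |b| ≤ |b| * |softThresh lam x| := by
  have h1 : b * x ≤ |b| * |x| := by
    calc b * x ≤ |b * x| := le_abs_self _
    _ = |b| * |x| := abs_mul _ _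
  rw [softThresh_abs lam x hlam]
  by_cases h : lam < |x|
  · rw [if_pos h]; nlinarith [abs_nonneg b]
  · rw [if_neg h]
    push_neg at h
    nlinarith [abs_nonneg b, abs_nonneg x]

theorem stmt7 {p : ℕ} (v : EuclideanSpace ℝ (Fin p)) (lam : ℝ) (hlam : 0 ≤ lam)
    (w : EuclideanSpace ℝ (Fin p)) (hw : ∀ j, w j = softThresh lam (v j)) (hw0 : w ≠ 0) :
    IsGreatest {y : ℝ | ∃ β : EuclideanSpace ℝ (Fin p),
      ‖β‖ = 1 ∧ y = ⟪β, v⟫ - lam * ∑ j, |β j|} ‖w‖ := by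
  have hwpos : (0:ℝ) < ‖w‖ := norm_pos_iff.mpr hw0
  have hkey : ∀ j, w j * v j - lam * |w j| = (w j) ^ 2 := fun j => by
    rw [hw j]; exact softThresh_key lam (v j) hlam
  have hnormsq : ∑ j, (w j)^2 = ‖w‖^2 := by
    rw [EuclideanSpace.norm_eq, Real.sq_sqrt (by positivity)]
    simp [sq_abs]
  constructor
  · refine ⟨‖w‖⁻¹ • w, ?_, ?_⟩
    · rw [norm_smul, norm_inv, norm_norm]
      field_simp
    · have happ : ∀ j, (‖w‖⁻¹ • w) j = ‖w‖⁻¹ * w j := fun j => rfl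
      rw [real_inner_smul_left]
      have hinner : ⟪w, v⟫ = ∑ j, w j * v j := by
        simp [PiLp.inner_apply, RCLike.inner_apply, mul_comm]
      have habs : ∑ j, |(‖w‖⁻¹ • w) j| = ‖w‖⁻¹ * ∑ j, |w j| := by
        rw [Finset.mul_sum]
        refine Finset.sum_congr rfl fun j _ => ?_
        rw [happ, abs_mul, abs_of_nonneg (by positivity)]
      rw [hinner, habs]
      have : ‖w‖⁻¹ * (∑ j, w j * v j) - lam * (‖w‖⁻¹ * ∑ j, |w j|) =
          ‖w‖⁻¹ * (∑ j, (w j * v j - lam * |w j|)) := by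
        rw [Finset.sum_sub_distrib, ← Finset.mul_sum]; ring
      rw [this]
      simp_rw [hkey]
      rw [hnormsq, sq]
      field_simp
  · rintro y ⟨β, hβ, rfl⟩
    have hinner : ⟪β, v⟫ = ∑ j, β j * v j := by
      simp [PiLp.inner_apply, RCLike.inner_apply, mul_comm]
    rw [hinner, Finset.mul_sum, ← Finset.sum_sub_distrib]
    have hstep : ∀ j ∈ Finset.univ, β j * v j - lam * |β j| ≤ |β j| * |w j| := by
      intro j _
      rw [hw j]
      exact softThresh_bound lam (v j) (β j) hlam
    refine le_trans (Finset.sum_le_sum hstep) ?_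
    set β' : EuclideanSpace ℝ (Fin p) := WithLp.toLp 2 (fun j => |β j|) with hβ'
    set w' : EuclideanSpace ℝ (Fin p) := WithLp.toLp 2 (fun j => |w j|) with hw'
    have h1 : ∑ j, |β j| * |w j| = ⟪β', w'⟫ := by
      simp [PiLp.inner_apply, RCLike.inner_apply, β', w', mul_comm]
    have h2 : ‖β'‖ = ‖β‖ := by
      rw [EuclideanSpace.norm_eq, EuclideanSpace.norm_eq]
      congr 1
      exact Finset.sum_congr rfl fun j _ => by simp [β']
    have h3 : ‖w'‖ = ‖w‖ := by
      rw [EuclideanSpace.norm_eq, EuclideanSpace.norm_eq]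
      congr 1
      exact Finset.sum_congr rfl fun j _ => by simp [w']
    calc ∑ j, |β j| * |w j| = ⟪β', w'⟫ := h1
      _ ≤ ‖β'‖ * ‖w'‖ := real_inner_le_norm _ _
      _ = ‖w‖ := by rw [h2, h3, hβ, one_mul]
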